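/- If all n ≥ 2 circles of an arrangement in the plane pass through one common point, then the number of regions of the complement belongs to L_n, the set of region counts of arrangements of n lines. -/

import Mathlib

noncomputable section

/-- The number of connected components of the complement of `S`. -/
def regionCount {X : Type*} [TopologicalSpace X] (S : Set X) : ℕ :=
  Nat.card (ConnectedComponents ↥(Sᶜ))

/-- A line in the plane `ℝ²`. -/
def IsLine (L : Set (ℝ × ℝ)) : Prop :=
  ∃ a b c : ℝ, (a, b) ≠ (0, 0) ∧ L = {p : ℝ × ℝ | a * p.1 + b * p.2 = c}

/-- A circle in the plane `ℝ²`. -/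
def IsCircle (S : Set (ℝ × ℝ)) : Prop :=
  ∃ (o : ℝ × ℝ) (r : ℝ), 0 < r ∧
    S = {p : ℝ × ℝ | (p.1 - o.1) ^ 2 + (p.2 - o.2) ^ 2 = r ^ 2}

/-- An arrangement of lines is in general position if every two lines meet
(no two parallel) and no three are concurrent. -/
def LinesGenPos {n : ℕ} (ℓ : Fin n → Set (ℝ × ℝ)) : Prop :=
  (∀ i j, i ≠ j → (ℓ i ∩ ℓ j).Nonempty) ∧
    (∀ i j k, i ≠ j → j ≠ k → i ≠ k → ℓ i ∩ ℓ j ∩ ℓ k = ∅)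

/-- An arrangement of circles is in general position if every two circles cross
in exactly two points and no three circles are concurrent. -/
def CirclesGenPos {n : ℕ} (c : Fin n → Set (ℝ × ℝ)) : Prop :=
  (∀ i j, i ≠ j → Nat.card ↥(c i ∩ c j) = 2) ∧
    (∀ i j k, i ≠ j → j ≠ k → i ≠ k → c i ∩ c j ∩ c k = ∅)

/-- `Lset n`: possible numbers of regions of `n` distinct lines in the plane. -/
def Lset (n : ℕ) : Set ℕ :=
  {f | ∃ ℓ : Fin n → Set (ℝ × ℝ), (∀ i, IsLine (ℓ i)) ∧ Function.Injective ℓ ∧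
    f = regionCount (⋃ i, ℓ i)}

/-- `Cset n`: possible numbers of regions of `n` distinct circles in the plane,
not in general position, every two of which share at least one point. -/
def Cset (n : ℕ) : Set ℕ :=
  {f | ∃ c : Fin n → Set (ℝ × ℝ), (∀ i, IsCircle (c i)) ∧ Function.Injective c ∧
    (∀ i j, i ≠ j → (c i ∩ c j).Nonempty) ∧ ¬ CirclesGenPos c ∧
    f = regionCount (⋃ i, c i)}

/-- Inversion of the plane with center `O` and radius `r`. -/
def inversion (O : ℝ × ℝ) (r : ℝ) (P : ℝ × ℝ) : ℝ × ℝ :=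
  (O.1 + r ^ 2 * (P.1 - O.1) / ((P.1 - O.1) ^ 2 + (P.2 - O.2) ^ 2),
   O.2 + r ^ 2 * (P.2 - O.2) / ((P.1 - O.1) ^ 2 + (P.2 - O.2) ^ 2))

namespace Stmt13Aux

open Set Metric

/-! ### Topological lemmas -/

lemma ccCardEqOfHomeomorph {X Y : Type*} [TopologicalSpace X] [TopologicalSpace Y] (e : X ≃ₜ Y) :
    Nat.card (ConnectedComponents X) = Nat.card (ConnectedComponents Y) := by
  refine Nat.card_congr
    ⟨(ConnectedComponents.continuous_coe.comp e.continuous).connectedComponentsLift,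
     (ConnectedComponents.continuous_coe.comp e.symm.continuous).connectedComponentsLift,
     ?_, ?_⟩
  · intro q
    obtain ⟨x, rfl⟩ := ConnectedComponents.surjective_coe q
    simp
  · intro q
    obtain ⟨x, rfl⟩ := ConnectedComponents.surjective_coe q
    simp

lemma rank_fact : 1 < Module.rank ℝ (ℝ × ℝ) := by
  simp [Module.rank_self]; norm_num

lemma puncturedBall_preconnected (x : ℝ × ℝ) {r : ℝ} (hr : 0 < r) :
    IsPreconnected (ball x r \ {x}) := by
  have hr2 : 0 < r / 2 := by linarith
  set x₀ : ℝ × ℝ := x + (r / 2, 0) with hx₀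
  have hx₀s : x₀ ∈ sphere x (r / 2) := by
    simp only [mem_sphere, hx₀, dist_eq_norm, add_sub_cancel_left, Prod.norm_def,
      Real.norm_eq_abs, abs_of_pos hr2, abs_zero]
    exact max_eq_left (le_of_lt hr2)
  have hsub : sphere x (r / 2) ⊆ ball x r \ {x} := by
    intro p hp
    simp only [mem_sphere] at hp
    constructor
    · simp only [mem_ball, hp]; linarith
    · simp only [mem_singleton_iff]
      intro h; rw [h] at hp; simp at hp; linarith
  apply isPreconnected_of_forall x₀
  intro y hy
  obtain ⟨hyb, hyx⟩ := hy
  have hyx' : y ≠ x := hyx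
  have hd : 0 < dist y x := dist_pos.2 hyx'
  have hdb : dist y x < r := mem_ball.1 hyb
  set t : ℝ := (r / 2) / dist y x with ht
  have htpos : 0 < t := div_pos hr2 hd
  set y' : ℝ × ℝ := x + t • (y - x) with hy'
  have hy's : y' ∈ sphere x (r / 2) := by
    simp only [mem_sphere, hy', dist_eq_norm, add_sub_cancel_left, norm_smul,
      Real.norm_eq_abs, abs_of_pos htpos, ht]
    rw [← dist_eq_norm]
    rw [abs_of_pos (by positivity : (0:ℝ) < r / 2 / dist y x)]
    field_simp
  have hseg : segment ℝ y y' ⊆ ball x r \ {x} := by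
    intro p hp
    rw [segment_eq_image'] at hp
    obtain ⟨θ, hθ, rfl⟩ := hp
    have hcoeff : y + θ • (y' - y) - x = (1 + θ * (t - 1)) • (y - x) := by
      rw [hy']
      module
    have hs0 : 0 < 1 + θ * (t - 1) := by
      rcases le_or_gt t 1 with h | h
      · nlinarith [hθ.1, hθ.2]
      · nlinarith [hθ.1, hθ.2]
    have hsle : (1 + θ * (t - 1)) * dist y x < r := by
      have h1 : t * dist y x = r / 2 := by rw [ht]; field_simp
      rcases le_or_gt t 1 with h | h
      · have : 1 + θ * (t - 1) ≤ 1 := by nlinarith [hθ.1, hθ.2]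
        nlinarith [h1]
      · have : 1 + θ * (t - 1) ≤ t := by nlinarith [hθ.1, hθ.2]
        nlinarith [h1]
    have hnorm : dist (y + θ • (y' - y)) x = (1 + θ * (t - 1)) * dist y x := by
      rw [dist_eq_norm, hcoeff, norm_smul, Real.norm_eq_abs, abs_of_pos hs0, ← dist_eq_norm]
    constructor
    · rw [mem_ball, hnorm]; exact hsle
    · simp only [mem_singleton_iff]
      intro h
      have : dist (y + θ • (y' - y)) x = 0 := by rw [h, dist_self]
      rw [hnorm] at this
      nlinarith
  refine ⟨segment ℝ y y' ∪ sphere x (r / 2), union_subset hseg hsub, ?_, ?_, ?_⟩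
  · exact Or.inr hx₀s
  · exact Or.inl (left_mem_segment ℝ y y')
  · apply IsPreconnected.union y'
    · exact right_mem_segment ℝ y y'
    · exact hy's
    · exact (convex_segment y y').isPreconnected
    · exact (isConnected_sphere rank_fact x (le_of_lt hr2)).isPreconnected

lemma punctured_open_preconnected {U : Set (ℝ × ℝ)} (hU : IsOpen U) (hUc : IsPreconnected U)
    (x : ℝ × ℝ) : IsPreconnected (U \ {x}) := by
  by_cases hx : x ∈ U
  swap
  · rwa [diff_singleton_eq_self hx]
  obtain ⟨r', hr', hball⟩ := Metric.isOpen_iff.1 hU x hx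
  have hr2 : 0 < r' / 2 := by linarith
  set D : Set (ℝ × ℝ) := ball x r' \ {x} with hD
  have hDsub : D ⊆ U \ {x} := diff_subset_diff_left hball
  have hDpre : IsPreconnected D := puncturedBall_preconnected x hr'
  set x₀ : ℝ × ℝ := x + (r' / 2, 0) with hx₀
  have hx₀D : x₀ ∈ D := by
    constructor
    · rw [mem_ball, dist_eq_norm]
      simp only [hx₀, add_sub_cancel_left, Prod.norm_def, Real.norm_eq_abs,
        abs_of_pos hr2, abs_zero]
      rw [max_eq_left (le_of_lt hr2)]; linarith
    · simp only [mem_singleton_iff, hx₀]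
      intro h
      have := congrArg Prod.fst h
      simp at this
      linarith
  set W : Set (ℝ × ℝ) := U \ closedBall x (r' / 2) with hW
  have hWopen : IsOpen W := hU.sdiff isClosed_closedBall
  apply isPreconnected_of_forall x₀
  intro y hy
  rcases lt_or_ge (dist y x) r' with hcase | hcase
  · exact ⟨D, hDsub, hx₀D, ⟨mem_ball.2 hcase, hy.2⟩, hDpre⟩
  · have hyW : y ∈ W := ⟨hy.1, by simp only [mem_closedBall, not_le]; linarith⟩
    set C : Set (ℝ × ℝ) := connectedComponentIn W y with hC
    have hCopen : IsOpen C := hWopen.connectedComponentIn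
    have hCpre : IsPreconnected C := isPreconnected_connectedComponentIn
    have hCW : C ⊆ W := connectedComponentIn_subset W y
    have hyC : y ∈ C := mem_connectedComponentIn hyW
    have hCfar : closure C ⊆ {p : ℝ × ℝ | r' / 2 ≤ dist p x} := by
      apply closure_minimal
      · intro p hp
        have := (hCW hp).2
        simp only [mem_closedBall, not_le] at this
        exact le_of_lt this
      · have : Continuous fun p : ℝ × ℝ => dist p x := continuous_id.dist continuous_const
        exact isClosed_le continuous_const this
    have hz : ∃ z, z ∈ closure C ∧ z ∈ U ∧ z ∉ C := by
      by_contra hcon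
      push_neg at hcon
      have hcover : U ⊆ C ∪ (closure C)ᶜ := by
        intro p hp
        by_cases hpc : p ∈ closure C
        · exact Or.inl (hcon p hpc hp)
        · exact Or.inr hpc
      have h1 : (U ∩ C).Nonempty := ⟨y, hy.1, hyC⟩
      have h2 : (U ∩ (closure C)ᶜ).Nonempty := by
        refine ⟨x, hx, ?_⟩
        intro hxc
        have := hCfar hxc
        simp only [mem_setOf_eq, dist_self] at this
        linarith
      obtain ⟨p, hpU, hpC, hpCc⟩ := hUc C (closure C)ᶜ hCopen (isClosed_closure.isOpen_compl)
        hcover h1 h2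
      exact hpCc (subset_closure hpC)
    obtain ⟨z, hzcl, hzU, hzC⟩ := hz
    have hzd : dist z x = r' / 2 := by
      have h1 : r' / 2 ≤ dist z x := hCfar hzcl
      rcases lt_or_eq_of_le h1 with h | h
      · exfalso
        have hzW : z ∈ W := ⟨hzU, by simp only [mem_closedBall, not_le]; exact h⟩
        have hzopen : IsOpen (connectedComponentIn W z) := hWopen.connectedComponentIn
        have hznb : connectedComponentIn W z ∈ nhds z :=
          hzopen.mem_nhds (mem_connectedComponentIn hzW)
        obtain ⟨w, hw1, hw2⟩ := mem_closure_iff_nhds.1 hzcl _ hznb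
        have e1 : connectedComponentIn W z = connectedComponentIn W w :=
          connectedComponentIn_eq hw1
        have e2 : connectedComponentIn W y = connectedComponentIn W w :=
          connectedComponentIn_eq hw2
        apply hzC
        rw [hC, e2, ← e1]
        exact mem_connectedComponentIn hzW
      · exact h.symm
    have hzD : z ∈ D := by
      constructor
      · rw [mem_ball, hzd]; linarith
      · simp only [mem_singleton_iff]
        intro h; rw [h] at hzd; simp at hzd; linarith
    refine ⟨(C ∪ {z}) ∪ D, ?_, Or.inr hx₀D, Or.inl (Or.inl hyC), ?_⟩
    · apply union_subset
      · apply union_subset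
        · exact fun p hp => ⟨(hCW hp).1, by
            simp only [mem_singleton_iff]
            intro h
            have := (hCW hp).2
            simp only [mem_closedBall, not_le] at this
            rw [h] at this; simp at this; linarith⟩
        · intro p hp
          simp only [mem_singleton_iff] at hp
          subst hp
          exact hDsub hzD
      · exact hDsub
    · apply IsPreconnected.union z
      · exact Or.inr rfl
      · exact hzD
      · exact hCpre.subset_closure subset_union_left
          (union_subset subset_closure (by
            intro p hp; simp only [mem_singleton_iff] at hp; subst hp; exact hzcl))
      · exact hDpre

lemma preimage_coe_preconnected {U s : Set (ℝ × ℝ)} (hs : IsPreconnected s) (hsub : s ⊆ U) :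
    IsPreconnected (((↑) : ↥U → ℝ × ℝ) ⁻¹' s) := by
  rw [← Topology.IsInducing.isPreconnected_image Topology.IsInducing.subtypeVal]
  rwa [Subtype.image_preimage_coe, inter_eq_right.2 hsub]

lemma card_cc_punctured {U : Set (ℝ × ℝ)} (hU : IsOpen U) {x : ℝ × ℝ} (hx : x ∈ U) :
    Nat.card (ConnectedComponents ↥(U \ {x})) = Nat.card (ConnectedComponents ↥U) := by
  have hsub : U \ {x} ⊆ U := diff_subset
  set ι : ↥(U \ {x}) → ↥U := Set.inclusion hsub with hι
  have hι_cont : Continuous ι := continuous_inclusion hsub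
  have hf : Continuous ((ConnectedComponents.mk : ↥U → _) ∘ ι) :=
    ConnectedComponents.continuous_coe.comp hι_cont
  set φ := hf.connectedComponentsLift with hφ
  have hbij : Function.Bijective φ := by
    constructor
    · intro q1 q2 h
      obtain ⟨a, rfl⟩ := ConnectedComponents.surjective_coe q1
      obtain ⟨b, rfl⟩ := ConnectedComponents.surjective_coe q2
      simp only [hφ, Continuous.connectedComponentsLift_apply_coe, Function.comp_apply] at h
      rw [ConnectedComponents.coe_eq_coe'] at h ⊢
      set V : Set (ℝ × ℝ) := connectedComponentIn U (b : ℝ × ℝ) with hV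
      have hbU : (b : ℝ × ℝ) ∈ U := (b.2 : (b : ℝ × ℝ) ∈ U \ {x}).1
      have hVeq : V = (↑) '' connectedComponent (⟨(b : ℝ × ℝ), hbU⟩ : ↥U) :=
        connectedComponentIn_eq_image hbU
      have haV : (a : ℝ × ℝ) ∈ V := by
        rw [hVeq]
        refine ⟨ι a, ?_, rfl⟩
        convert h using 2
      have hVopen : IsOpen V := hU.connectedComponentIn
      have hVpre : IsPreconnected V := isPreconnected_connectedComponentIn
      have hVpunct : IsPreconnected (V \ {x}) := punctured_open_preconnected hVopen hVpre x
      have hVsub : V \ {x} ⊆ U \ {x} :=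
        diff_subset_diff_left (connectedComponentIn_subset U _)
      have hpre : IsPreconnected (((↑) : ↥(U \ {x}) → ℝ × ℝ) ⁻¹' (V \ {x})) :=
        preimage_coe_preconnected hVpunct hVsub
      have haa : a ∈ ((↑) : ↥(U \ {x}) → ℝ × ℝ) ⁻¹' (V \ {x}) := ⟨haV, a.2.2⟩
      have hbb : b ∈ ((↑) : ↥(U \ {x}) → ℝ × ℝ) ⁻¹' (V \ {x}) :=
        ⟨mem_connectedComponentIn hbU, b.2.2⟩
      exact hpre.subset_connectedComponent hbb haa
    · intro q
      obtain ⟨a, rfl⟩ := ConnectedComponents.surjective_coe q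
      by_cases hax : (a : ℝ × ℝ) = x
      · obtain ⟨r, hr, hball⟩ := Metric.isOpen_iff.1 hU x hx
        set y : ℝ × ℝ := x + (r / 2, 0) with hy
        have hyball : y ∈ ball x r := by
          rw [mem_ball, dist_eq_norm, hy]
          simp only [add_sub_cancel_left, Prod.norm_def, Real.norm_eq_abs, abs_zero]
          rw [abs_of_pos (by linarith), max_eq_left (by linarith)]
          linarith
        have hyU : y ∈ U := hball hyball
        have hyx : y ≠ x := by
          intro h
          have := congrArg Prod.fst h
          simp [hy] at this
          linarith
        refine ⟨ConnectedComponents.mk ⟨y, hyU, hyx⟩, ?_⟩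
        simp only [hφ, Continuous.connectedComponentsLift_apply_coe, Function.comp_apply]
        rw [ConnectedComponents.coe_eq_coe']
        have hpre : IsPreconnected (((↑) : ↥U → ℝ × ℝ) ⁻¹' (ball x r)) :=
          preimage_coe_preconnected (convex_ball x r).isPreconnected hball
        have hmem1 : (ι ⟨y, hyU, hyx⟩ : ↥U) ∈ ((↑) : ↥U → ℝ × ℝ) ⁻¹' (ball x r) := by
          simp only [mem_preimage]; exact hyball
        have hmem2 : a ∈ ((↑) : ↥U → ℝ × ℝ) ⁻¹' (ball x r) := by
          simp only [mem_preimage, hax]; exact mem_ball_self hr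
        exact hpre.subset_connectedComponent hmem2 hmem1
      · refine ⟨ConnectedComponents.mk ⟨(a : ℝ × ℝ), a.2, hax⟩, ?_⟩
        simp only [hφ, Continuous.connectedComponentsLift_apply_coe, Function.comp_apply]
        rfl
  exact Nat.card_congr (Equiv.ofBijective φ hbij)

/-! ### Inversion algebra -/

lemma denom_pos {O p : ℝ × ℝ} (hp : p ≠ O) :
    0 < (p.1 - O.1) ^ 2 + (p.2 - O.2) ^ 2 := by
  by_cases h1 : p.1 = O.1
  · have h2 : p.2 ≠ O.2 := fun h2 => hp (Prod.ext h1 h2)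
    have h3 : p.2 - O.2 ≠ 0 := sub_ne_zero.2 h2
    nlinarith [sq_nonneg (p.1 - O.1), pow_two_pos_of_ne_zero h3]
  · have h3 : p.1 - O.1 ≠ 0 := sub_ne_zero.2 h1
    nlinarith [sq_nonneg (p.2 - O.2), pow_two_pos_of_ne_zero h3]

lemma inv_fst (O p : ℝ × ℝ) :
    (inversion O 1 p).1 = O.1 + (p.1 - O.1) / ((p.1 - O.1) ^ 2 + (p.2 - O.2) ^ 2) := by
  simp [inversion]

lemma inv_snd (O p : ℝ × ℝ) :
    (inversion O 1 p).2 = O.2 + (p.2 - O.2) / ((p.1 - O.1) ^ 2 + (p.2 - O.2) ^ 2) := by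
  simp [inversion]

lemma inv_ne {O p : ℝ × ℝ} (hp : p ≠ O) : inversion O 1 p ≠ O := by
  have hd := denom_pos hp
  intro h
  apply hp
  have h1 := congrArg Prod.fst h
  have h2 := congrArg Prod.snd h
  rw [inv_fst] at h1
  rw [inv_snd] at h2
  have e1 : (p.1 - O.1) / ((p.1 - O.1) ^ 2 + (p.2 - O.2) ^ 2) = 0 := by linarith
  have e2 : (p.2 - O.2) / ((p.1 - O.1) ^ 2 + (p.2 - O.2) ^ 2) = 0 := by linarith
  rw [div_eq_zero_iff] at e1 e2
  have f1 : p.1 = O.1 := by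
    rcases e1 with h | h
    · linarith
    · linarith
  have f2 : p.2 = O.2 := by
    rcases e2 with h | h
    · linarith
    · linarith
  exact Prod.ext f1 f2

lemma inv_denom {O p : ℝ × ℝ} (hp : p ≠ O) :
    ((inversion O 1 p).1 - O.1) ^ 2 + ((inversion O 1 p).2 - O.2) ^ 2 =
      1 / ((p.1 - O.1) ^ 2 + (p.2 - O.2) ^ 2) := by
  have hd := (denom_pos hp).ne'
  rw [inv_fst, inv_snd]
  field_simp
  ring

lemma inv_invol {O p : ℝ × ℝ} (hp : p ≠ O) : inversion O 1 (inversion O 1 p) = p := by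
  have hd := (denom_pos hp).ne'
  have hD := inv_denom hp
  apply Prod.ext
  · rw [inv_fst, hD, inv_fst]
    field_simp
    ring
  · rw [inv_snd, hD, inv_snd]
    field_simp
    ring

lemma inv_circle {O o : ℝ × ℝ} {r : ℝ} (hO : (O.1 - o.1) ^ 2 + (O.2 - o.2) ^ 2 = r ^ 2)
    {p : ℝ × ℝ} (hp : p ≠ O) :
    ((p.1 - o.1) ^ 2 + (p.2 - o.2) ^ 2 = r ^ 2) ↔
      (o.1 - O.1) * (inversion O 1 p).1 + (o.2 - O.2) * (inversion O 1 p).2 =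
        1 / 2 + (o.1 - O.1) * O.1 + (o.2 - O.2) * O.2 := by
  have hd := (denom_pos hp).ne'
  rw [inv_fst, inv_snd]
  constructor
  · intro h
    field_simp
    nlinarith [h, hO]
  · intro h
    field_simp at h
    nlinarith [h, hO]

lemma line_coeff {O : ℝ × ℝ} {a b a' b' : ℝ} (ha : a ^ 2 + b ^ 2 ≠ 0) (ha' : a' ^ 2 + b' ^ 2 ≠ 0)
    (h : {q : ℝ × ℝ | a * q.1 + b * q.2 = 1 / 2 + a * O.1 + b * O.2} =
         {q : ℝ × ℝ | a' * q.1 + b' * q.2 = 1 / 2 + a' * O.1 + b' * O.2}) :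
    a = a' ∧ b = b' := by
  have hs : (0 : ℝ) < a ^ 2 + b ^ 2 :=
    lt_of_le_of_ne (by positivity) (Ne.symm ha)
  have hs' : (0 : ℝ) < a' ^ 2 + b' ^ 2 :=
    lt_of_le_of_ne (by positivity) (Ne.symm ha')
  have e0 : (O.1 + a / (2 * (a ^ 2 + b ^ 2)), O.2 + b / (2 * (a ^ 2 + b ^ 2))) ∈
      {q : ℝ × ℝ | a * q.1 + b * q.2 = 1 / 2 + a * O.1 + b * O.2} := by
    simp only [Set.mem_setOf_eq]
    field_simp
    ring
  have e0' : (O.1 + a' / (2 * (a' ^ 2 + b' ^ 2)), O.2 + b' / (2 * (a' ^ 2 + b' ^ 2))) ∈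
      {q : ℝ × ℝ | a' * q.1 + b' * q.2 = 1 / 2 + a' * O.1 + b' * O.2} := by
    simp only [Set.mem_setOf_eq]
    field_simp
    ring
  rw [h] at e0
  rw [← h] at e0'
  simp only [Set.mem_setOf_eq] at e0 e0'
  have d1 : a' * a + b' * b = a ^ 2 + b ^ 2 := by
    have := e0
    field_simp at this
    nlinarith [this]
  have d2 : a * a' + b * b' = a' ^ 2 + b' ^ 2 := by
    have := e0'
    field_simp at this
    nlinarith [this]
  have hss : a ^ 2 + b ^ 2 = a' ^ 2 + b' ^ 2 := by linarith [d1, d2]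
  have h0 : (a - a') ^ 2 + (b - b') ^ 2 = 0 := by linear_combination (-2) * d1 - hss
  constructor
  · nlinarith [sq_nonneg (a - a'), sq_nonneg (b - b')]
  · nlinarith [sq_nonneg (a - a'), sq_nonneg (b - b')]

lemma inv_continuousOn (O : ℝ × ℝ) : ContinuousOn (inversion O 1) {O}ᶜ := by
  have hrw : inversion O 1 = fun p : ℝ × ℝ =>
      ((O.1 + 1 ^ 2 * (p.1 - O.1) / ((p.1 - O.1) ^ 2 + (p.2 - O.2) ^ 2),
        O.2 + 1 ^ 2 * (p.2 - O.2) / ((p.1 - O.1) ^ 2 + (p.2 - O.2) ^ 2)) : ℝ × ℝ) := rfl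
  rw [hrw]
  apply ContinuousOn.prodMk
  · apply ContinuousOn.add continuousOn_const
    apply ContinuousOn.div
    · fun_prop
    · fun_prop
    · intro p hp
      exact (denom_pos (by simpa using hp)).ne'
  · apply ContinuousOn.add continuousOn_const
    apply ContinuousOn.div
    · fun_prop
    · fun_prop
    · intro p hp
      exact (denom_pos (by simpa using hp)).ne'

end Stmt13Aux

open Stmt13Aux Set

/-- If all `n ≥ 2` circles pass through one common point, then the number of
regions of the complement belongs to `Lset n`. -/
theorem stmt13 (n : ℕ) (hn : 2 ≤ n) (c : Fin n → Set (ℝ × ℝ))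
    (hc : ∀ i, IsCircle (c i)) (hinj : Function.Injective c)
    (O : ℝ × ℝ) (hO : ∀ i, O ∈ c i) :
    regionCount (⋃ i, c i) ∈ Lset n := by
  choose o r hrpos hceq using hc
  have hOc : ∀ i, (O.1 - (o i).1) ^ 2 + (O.2 - (o i).2) ^ 2 = (r i) ^ 2 := by
    intro i
    have := hO i
    rw [hceq i] at this
    exact this
  set a : Fin n → ℝ := fun i => (o i).1 - O.1 with ha
  set b : Fin n → ℝ := fun i => (o i).2 - O.2 with hb
  have hab : ∀ i, (a i) ^ 2 + (b i) ^ 2 = (r i) ^ 2 := by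
    intro i
    show ((o i).1 - O.1) ^ 2 + ((o i).2 - O.2) ^ 2 = (r i) ^ 2
    linear_combination hOc i
  have habne : ∀ i, (a i) ^ 2 + (b i) ^ 2 ≠ 0 := by
    intro i
    rw [hab i]
    exact (pow_pos (hrpos i) 2).ne'
  set ℓ : Fin n → Set (ℝ × ℝ) := fun i =>
    {q : ℝ × ℝ | a i * q.1 + b i * q.2 = 1 / 2 + a i * O.1 + b i * O.2} with hℓ
  have hlLine : ∀ i, IsLine (ℓ i) := by
    intro i
    refine ⟨a i, b i, 1 / 2 + a i * O.1 + b i * O.2, ?_, rfl⟩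
    intro h
    rw [Prod.mk.injEq] at h
    apply habne i
    rw [h.1, h.2]
    ring
  have hlinj : Function.Injective ℓ := by
    intro i j hij
    apply hinj
    have hcoef := line_coeff (habne i) (habne j) hij
    have hoij : o i = o j := by
      apply Prod.ext
      · have := hcoef.1
        rw [ha] at this
        simpa using this
      · have := hcoef.2
        rw [hb] at this
        simpa using this
    have hrij : r i = r j := by
      have h1 : (r i) ^ 2 = (r j) ^ 2 := by
        rw [← hab i, ← hab j, hcoef.1, hcoef.2]
      have h2 : (r i - r j) * (r i + r j) = 0 := by linear_combination h1
      rcases mul_eq_zero.1 h2 with h | h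
      · linarith
      · nlinarith [hrpos i, hrpos j]
    rw [hceq i, hceq j, hoij, hrij]
  -- key facts
  have hOnotl : ∀ i, O ∉ ℓ i := by
    intro i h
    rw [hℓ] at h
    simp only [mem_setOf_eq] at h
    linarith [h]
  have hmemiff : ∀ (p : ℝ × ℝ), p ≠ O → ∀ i, (p ∈ c i ↔ inversion O 1 p ∈ ℓ i) := by
    intro p hp i
    rw [hceq i, hℓ]
    simp only [mem_setOf_eq]
    have := inv_circle (hOc i) hp
    rw [ha, hb]
    exact this
  set A : Set (ℝ × ℝ) := (⋃ i, c i)ᶜ with hA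
  set B : Set (ℝ × ℝ) := (⋃ i, ℓ i)ᶜ with hB
  have hOin : O ∈ ⋃ i, c i := mem_iUnion.2 ⟨⟨0, by omega⟩, hO _⟩
  have hAne : ∀ p ∈ A, p ≠ O := by
    intro p hp h
    rw [h] at hp
    exact hp hOin
  have hOB : O ∈ B := by
    rw [hB]
    simp only [mem_compl_iff, mem_iUnion, not_exists]
    exact hOnotl
  -- forward map
  have hfwd : ∀ p ∈ A, inversion O 1 p ∈ B \ {O} := by
    intro p hp
    have hpO := hAne p hp
    constructor
    · simp only [hB, mem_compl_iff, mem_iUnion, not_exists]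
      intro i hi
      have : p ∈ c i := (hmemiff p hpO i).2 hi
      exact (mem_compl_iff _ _).1 hp (mem_iUnion.2 ⟨i, this⟩)
    · simp only [mem_singleton_iff]
      exact inv_ne hpO
  have hbwd : ∀ q ∈ B \ {O}, inversion O 1 q ∈ A := by
    intro q hq
    have hqO : q ≠ O := hq.2
    simp only [hA, mem_compl_iff, mem_iUnion, not_exists]
    intro i hi
    have h1 : inversion O 1 q ≠ O := inv_ne hqO
    have h2 : inversion O 1 (inversion O 1 q) ∈ ℓ i := (hmemiff _ h1 i).1 hi
    rw [inv_invol hqO] at h2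
    exact (mem_compl_iff _ _).1 hq.1 (mem_iUnion.2 ⟨i, h2⟩)
  -- homeomorphism between ↥A and ↥(B \ {O})
  have hcontA : Continuous fun p : ↥A => inversion O 1 (p : ℝ × ℝ) := by
    apply (inv_continuousOn O).comp_continuous continuous_subtype_val
    intro x
    simpa using hAne _ x.2
  have hcontB : Continuous fun q : ↥(B \ {O}) => inversion O 1 (q : ℝ × ℝ) := by
    apply (inv_continuousOn O).comp_continuous continuous_subtype_val
    intro x
    exact x.2.2
  set e : ↥A ≃ₜ ↥(B \ {O}) :=
    { toFun := fun p => ⟨inversion O 1 p, hfwd p p.2⟩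
      invFun := fun q => ⟨inversion O 1 q, hbwd q q.2⟩
      left_inv := fun p => Subtype.ext (inv_invol (hAne _ p.2))
      right_inv := fun q => Subtype.ext (inv_invol (q.2.2 : (q : ℝ × ℝ) ≠ O))
      continuous_toFun := hcontA.subtype_mk _
      continuous_invFun := hcontB.subtype_mk _ } with he
  -- B is open
  have hBopen : IsOpen B := by
    rw [hB]
    rw [isOpen_compl_iff]
    apply isClosed_iUnion_of_finite
    intro i
    rw [hℓ]
    exact isClosed_eq (by fun_prop) continuous_const
  refine ⟨ℓ, hlLine, hlinj, ?_⟩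
  have h1 : regionCount (⋃ i, c i) = Nat.card (ConnectedComponents ↥A) := rfl
  have h2 : regionCount (⋃ i, ℓ i) = Nat.card (ConnectedComponents ↥B) := rfl
  rw [h1, h2, ccCardEqOfHomeomorph e, card_cc_punctured hBopen hOB]
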